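/- Let k be an odd positive integer, let t = (k+1)/2, and let n be a positive integer divisible by t. Then f(n,k) ≥ C(n,3) − t·C(n/t,3), where C(a,3) denotes the binomial coefficient. -/

import Mathlib

open Finset
open scoped Classical

/-- Edge set of the natural tight path `P^{(r)}_s` on vertex set `[s] = {1,…,s}`:
all intervals of `r` consecutive integers. -/
def pathEdges (r s : ℕ) : Finset (Finset ℕ) :=
  (Finset.Icc 1 (s - r + 1)).image (fun i => Finset.Icc i (i + r - 1))

/-- Edge set of the loose path `LP^{(r)}_s`: only the first and last edges. -/
def loosePathEdges (r s : ℕ) : Finset (Finset ℕ) :=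
  {Finset.Icc 1 r, Finset.Icc (s - r + 1) s}

/-- `C` is the edge set of a copy in `K^{(r)}_n` of the ordered hypergraph with
vertex set `[s]` and edge set `E`, i.e. the image of `E` under a strictly
increasing map `[s] → [n]`. -/
def IsCopy (n s : ℕ) (E : Finset (Finset ℕ)) (C : Finset (Finset ℕ)) : Prop :=
  ∃ f : ℕ → ℕ, StrictMonoOn f ↑(Finset.Icc 1 s) ∧
    (∀ v ∈ Finset.Icc 1 s, f v ∈ Finset.Icc 1 n) ∧
    C = E.image (fun e => e.image f)

/-- A transversal: a set `T` of `r`-element subsets of `[n]` meeting every copy. -/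
def IsTransversal (n r s : ℕ) (E : Finset (Finset ℕ)) (T : Finset (Finset ℕ)) : Prop :=
  T ⊆ (Finset.Icc 1 n).powersetCard r ∧
  ∀ C : Finset (Finset ℕ), IsCopy n s E C → ∃ e ∈ C, e ∈ T

/-- The transversal number `τ(n,H)`. -/
noncomputable def tau (n r s : ℕ) (E : Finset (Finset ℕ)) : ℕ :=
  sInf {m | ∃ T : Finset (Finset ℕ), IsTransversal n r s E T ∧ T.card = m}

/-- A packing: an edge-disjoint family of copies. -/
def IsPacking (n s : ℕ) (E : Finset (Finset ℕ)) (P : Finset (Finset (Finset ℕ))) : Prop :=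
  (∀ C ∈ P, IsCopy n s E C) ∧
  ∀ C ∈ P, ∀ C' ∈ P, C ≠ C' → Disjoint C C'

/-- The packing number `ν(n,H)`. -/
noncomputable def nu (n s : ℕ) (E : Finset (Finset ℕ)) : ℕ :=
  sSup {m | ∃ P : Finset (Finset (Finset ℕ)), IsPacking n s E P ∧ P.card = m}

/-- The ordered Turán number: maximum number of edges of a subgraph of
`K^{(r)}_n` containing no copy of the hypergraph with edge set `E`. -/
noncomputable def exNum (n r s : ℕ) (E : Finset (Finset ℕ)) : ℕ :=
  sSup {m | ∃ G ⊆ (Finset.Icc 1 n).powersetCard r,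
    (∀ C : Finset (Finset ℕ), IsCopy n s E C → ¬ C ⊆ G) ∧ G.card = m}

/-- `S ⊆ [n]` is `m`-left-biased. -/
def LeftBiased (n m : ℕ) (S : Finset ℕ) : Prop :=
  ∃ u ≤ n / 2, (S ∩ Finset.Icc 1 u).card = m ∧ S ∩ Finset.Icc (n + 1 - u) n = ∅

/-- `h(n,t,m)`: the number of `m`-left-biased `t`-element subsets of `[n]`. -/
noncomputable def hcount (n t m : ℕ) : ℕ :=
  (((Finset.Icc 1 n).powersetCard t).filter (LeftBiased n m)).card

/-- A fractional transversal. -/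
def IsFracTransversal (n r s : ℕ) (E : Finset (Finset ℕ)) (w : Finset ℕ → ℝ) : Prop :=
  (∀ e ∈ (Finset.Icc 1 n).powersetCard r, 0 ≤ w e) ∧
  ∀ C : Finset (Finset ℕ), IsCopy n s E C → 1 ≤ ∑ e ∈ C, w e

/-- The fractional transversal number `τ*(n,H)`. -/
noncomputable def tauStar (n r s : ℕ) (E : Finset (Finset ℕ)) : ℝ :=
  sInf {x : ℝ | ∃ w : Finset ℕ → ℝ, IsFracTransversal n r s E w ∧
    x = ∑ e ∈ (Finset.Icc 1 n).powersetCard r, w e}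

/-- A `k`-edge-labeling of the ordered complete graph on `[n]`. -/
def IsLabeling (n k : ℕ) (φ : ℕ → ℕ → ℕ) : Prop :=
  ∀ u v : ℕ, u ∈ Finset.Icc 1 n → v ∈ Finset.Icc 1 n → u < v → φ u v ∈ Finset.Icc 1 k

/-- The number of good triples `u < v < w` in `[n]` (those with `φ(uv) < φ(vw)`). -/
def goodCount (n : ℕ) (φ : ℕ → ℕ → ℕ) : ℕ :=
  (((Finset.Icc 1 n) ×ˢ (Finset.Icc 1 n) ×ˢ (Finset.Icc 1 n)).filter
    (fun p => p.1 < p.2.1 ∧ p.2.1 < p.2.2 ∧ φ p.1 p.2.1 < φ p.2.1 p.2.2)).card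

/-- The number of bad triples `u < v < w` in `[n]` (those with `φ(uv) ≥ φ(vw)`). -/
def badCount (n : ℕ) (φ : ℕ → ℕ → ℕ) : ℕ :=
  (((Finset.Icc 1 n) ×ˢ (Finset.Icc 1 n) ×ˢ (Finset.Icc 1 n)).filter
    (fun p => p.1 < p.2.1 ∧ p.2.1 < p.2.2 ∧ ¬ φ p.1 p.2.1 < φ p.2.1 p.2.2)).card

/-- `f(n,k)`: the maximum number of good triples over all `k`-edge-labelings of `[n]`. -/
noncomputable def fmax (n k : ℕ) : ℕ :=
  sSup {m | ∃ φ : ℕ → ℕ → ℕ, IsLabeling n k φ ∧ goodCount n φ = m}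

/-- A labeling is monotone if `φ(uv) ≤ φ(vw)` whenever `u < v < w` in `[n]`. -/
def IsMonotone (n : ℕ) (φ : ℕ → ℕ → ℕ) : Prop :=
  ∀ u v w : ℕ, u ∈ Finset.Icc 1 n → v ∈ Finset.Icc 1 n → w ∈ Finset.Icc 1 n →
    u < v → v < w → φ u v ≤ φ v w

/-- `Φ_L(v) = max{φ(uv) : u < v}`, with `Φ_L(1) = 0`. -/
def PhiL (φ : ℕ → ℕ → ℕ) (v : ℕ) : ℕ := (Finset.Ico 1 v).sup (fun u => φ u v)

/-- `Φ_R(v) = min{φ(vw) : v < w ≤ n}`, with `Φ_R(n) = k+1`. -/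
noncomputable def PhiR (n k : ℕ) (φ : ℕ → ℕ → ℕ) (v : ℕ) : ℕ :=
  if v = n then k + 1 else sInf {m | ∃ w ∈ Finset.Ioc v n, φ v w = m}

/-- `X_i = {v ∈ [n] : Φ_L(v) = i}`. -/
def XL (n : ℕ) (φ : ℕ → ℕ → ℕ) (i : ℕ) : Finset ℕ :=
  (Finset.Icc 1 n).filter (fun v => PhiL φ v = i)

/-- `X̂_i = {v ∈ [n] : Φ_R(v) = i}`. -/
noncomputable def XR (n k : ℕ) (φ : ℕ → ℕ → ℕ) (i : ℕ) : Finset ℕ :=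
  (Finset.Icc 1 n).filter (fun v => PhiR n k φ v = i)

/-- For odd positive `k`, `t = (k+1)/2` and `t ∣ n` with `n > 0`,
`f(n,k) ≥ C(n,3) - t·C(n/t,3)`. -/
lemma sort3 (a b c : ℕ) (hab : a ≠ b) (hac : a ≠ c) (hbc : b ≠ c) :
    ∃ u v w : ℕ, u < v ∧ v < w ∧ ({a, b, c} : Finset ℕ) = {u, v, w} := by
  have h : (a<b∧b<c) ∨ (a<c∧c<b) ∨ (b<a∧a<c) ∨ (b<c∧c<a) ∨ (c<a∧a<b) ∨ (c<b∧b<a) := by omega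
  rcases h with ⟨h1,h2⟩|⟨h1,h2⟩|⟨h1,h2⟩|⟨h1,h2⟩|⟨h1,h2⟩|⟨h1,h2⟩
  · exact ⟨a,b,c,h1,h2, rfl⟩
  · exact ⟨a,c,b,h1,h2, by ext x; simp only [Finset.mem_insert, Finset.mem_singleton]; tauto⟩
  · exact ⟨b,a,c,h1,h2, by ext x; simp only [Finset.mem_insert, Finset.mem_singleton]; tauto⟩
  · exact ⟨b,c,a,h1,h2, by ext x; simp only [Finset.mem_insert, Finset.mem_singleton]; tauto⟩
  · exact ⟨c,a,b,h1,h2, by ext x; simp only [Finset.mem_insert, Finset.mem_singleton]; tauto⟩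
  · exact ⟨c,b,a,h1,h2, by ext x; simp only [Finset.mem_insert, Finset.mem_singleton]; tauto⟩

lemma tripleCard (S : Finset ℕ) :
    ((S ×ˢ S ×ˢ S).filter (fun p => p.1 < p.2.1 ∧ p.2.1 < p.2.2)).card = S.card.choose 3 := by
  rw [← Finset.card_powersetCard 3 S]
  apply Finset.card_nbij (i := fun p => {p.1, p.2.1, p.2.2})
  · intro p hp
    simp only [Finset.mem_coe, Finset.mem_filter, Finset.mem_product] at hp ⊢
    obtain ⟨⟨h1,h2,h3⟩, h4, h5⟩ := hp
    rw [Finset.mem_powersetCard]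
    constructor
    · intro x hx
      simp only [Finset.mem_insert, Finset.mem_singleton] at hx
      rcases hx with rfl|rfl|rfl <;> assumption
    · rw [Finset.card_insert_of_notMem (by simp; omega),
        Finset.card_insert_of_notMem (by simp; omega), Finset.card_singleton]
  · rintro ⟨a,b,c⟩ hp ⟨d,e,f⟩ hq h
    simp only [Finset.coe_filter, Set.mem_setOf_eq, Finset.mem_product] at hp hq
    obtain ⟨_, h1, h2⟩ := hp; obtain ⟨_, h3, h4⟩ := hq
    simp only at h h1 h2 h3 h4
    have e1 : a ∈ ({d, e, f} : Finset ℕ) := by rw [← h]; simp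
    have e2 : b ∈ ({d, e, f} : Finset ℕ) := by rw [← h]; simp
    have e3 : c ∈ ({d, e, f} : Finset ℕ) := by rw [← h]; simp
    have e4 : d ∈ ({a, b, c} : Finset ℕ) := by rw [h]; simp
    have e5 : e ∈ ({a, b, c} : Finset ℕ) := by rw [h]; simp
    have e6 : f ∈ ({a, b, c} : Finset ℕ) := by rw [h]; simp
    simp only [Finset.mem_insert, Finset.mem_singleton] at e1 e2 e3 e4 e5 e6
    have : a = d ∧ b = e ∧ c = f := by omega
    simp [this.1, this.2.1, this.2.2]
  · intro S' hS'
    simp only [Finset.mem_coe, Finset.mem_powersetCard] at hS'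
    obtain ⟨hsub, hcard⟩ := hS'
    obtain ⟨a,b,c,hab,hac,hbc,rfl⟩ := Finset.card_eq_three.mp hcard
    obtain ⟨u,v,w,huv,hvw,heq⟩ := sort3 a b c hab hac hbc
    have hu : u ∈ S := hsub (by rw [heq]; simp)
    have hv : v ∈ S := hsub (by rw [heq]; simp)
    have hw : w ∈ S := hsub (by rw [heq]; simp)
    exact ⟨(u,v,w), by
      simp only [Finset.mem_coe, Finset.mem_filter, Finset.mem_product]
      exact ⟨⟨hu, hv, hw⟩, huv, hvw⟩, heq.symm⟩

theorem stmt12 (k t n : ℕ) (hk : Odd k) (hk0 : 0 < k) (ht : t = (k + 1) / 2)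
    (hn : 0 < n) (htn : t ∣ n) :
    n.choose 3 - t * (n / t).choose 3 ≤ fmax n k := by
  obtain ⟨j, hj⟩ := hk
  have ht0 : 0 < t := by omega
  set m := n / t with hm
  have hnm : n = t * m := by
    rw [hm, Nat.mul_div_cancel' htn]
  have hm0 : 0 < m := by
    rcases Nat.eq_zero_or_pos m with h | h
    · exfalso; rw [h, mul_zero] at hnm; omega
    · exact h
  have hcomm : m * t = t * m := mul_comm m t
  have hk2t : k = 2 * t - 1 := by omega
  -- the labeling
  set blk : ℕ → ℕ := fun x => (x - 1) / m with hblk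
  set φ : ℕ → ℕ → ℕ := fun u v => blk u + blk v + 1 with hφ
  have hblk_lt : ∀ x ∈ Finset.Icc 1 n, blk x < t := by
    intro x hx
    rw [Finset.mem_Icc] at hx
    simp only [hblk]
    rw [Nat.div_lt_iff_lt_mul hm0]
    omega
  have hblk_mono : ∀ u v : ℕ, u ≤ v → blk u ≤ blk v := by
    intro u v h
    exact Nat.div_le_div_right (by omega)
  have hblk_mem : ∀ x ∈ Finset.Icc 1 n, x ∈ Finset.Icc (m * blk x + 1) (m * blk x + m) := by
    intro x hx
    rw [Finset.mem_Icc] at hx ⊢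
    have h1 := Nat.div_add_mod (x - 1) m
    have h2 := Nat.mod_lt (x - 1) hm0
    simp only [hblk]
    omega
  have hlab : IsLabeling n k φ := by
    intro u v hu hv huv
    have h1 := hblk_lt u hu
    have h2 := hblk_lt v hv
    rw [Finset.mem_Icc]
    simp only [hφ]
    omega
  -- counts
  set s := (Finset.Icc 1 n) ×ˢ (Finset.Icc 1 n) ×ˢ (Finset.Icc 1 n) with hs
  set T := s.filter (fun p => p.1 < p.2.1 ∧ p.2.1 < p.2.2) with hT
  have hTcard : T.card = n.choose 3 := by
    rw [hT, hs, tripleCard, Nat.card_Icc]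
    congr 1
  have hGB : (T.filter (fun p => φ p.1 p.2.1 < φ p.2.1 p.2.2)).card +
      (T.filter (fun p => ¬ φ p.1 p.2.1 < φ p.2.1 p.2.2)).card = T.card :=
    Finset.card_filter_add_card_filter_not _
  -- good count equals the first filter
  have hgood : goodCount n φ = (T.filter (fun p => φ p.1 p.2.1 < φ p.2.1 p.2.2)).card := by
    unfold goodCount
    rw [hT, hs, Finset.filter_filter]
    simp only [and_assoc]
  -- bad triples are within a block
  have hbad : (T.filter (fun p => ¬ φ p.1 p.2.1 < φ p.2.1 p.2.2)).card ≤ t * m.choose 3 := by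
    have hsub : T.filter (fun p => ¬ φ p.1 p.2.1 < φ p.2.1 p.2.2) ⊆
        (Finset.range t).biUnion (fun b =>
          ((Finset.Icc (m * b + 1) (m * b + m)) ×ˢ (Finset.Icc (m * b + 1) (m * b + m)) ×ˢ
            (Finset.Icc (m * b + 1) (m * b + m))).filter
            (fun p => p.1 < p.2.1 ∧ p.2.1 < p.2.2)) := by
      intro p hp
      simp only [hT, hs, Finset.mem_filter, Finset.mem_product] at hp
      obtain ⟨⟨⟨h1, h2, h3⟩, h4, h5⟩, h6⟩ := hp
      have hb1 : blk p.1 ≤ blk p.2.1 := hblk_mono _ _ (le_of_lt h4)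
      have hb2 : blk p.2.1 ≤ blk p.2.2 := hblk_mono _ _ (le_of_lt h5)
      have heq1 : blk p.1 = blk p.2.1 := by simp only [hφ] at h6; omega
      have heq2 : blk p.2.1 = blk p.2.2 := by simp only [hφ] at h6; omega
      rw [Finset.mem_biUnion]
      refine ⟨blk p.1, Finset.mem_range.mpr (hblk_lt _ h1), ?_⟩
      simp only [Finset.mem_filter, Finset.mem_product]
      refine ⟨⟨hblk_mem _ h1, ?_, ?_⟩, h4, h5⟩
      · rw [heq1]; exact hblk_mem _ h2
      · rw [heq1, heq2]; exact hblk_mem _ h3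
    calc (T.filter (fun p => ¬ φ p.1 p.2.1 < φ p.2.1 p.2.2)).card
        ≤ _ := Finset.card_le_card hsub
      _ ≤ ∑ b ∈ Finset.range t, (((Finset.Icc (m * b + 1) (m * b + m)) ×ˢ
            (Finset.Icc (m * b + 1) (m * b + m)) ×ˢ
            (Finset.Icc (m * b + 1) (m * b + m))).filter
            (fun p => p.1 < p.2.1 ∧ p.2.1 < p.2.2)).card := Finset.card_biUnion_le
      _ = ∑ b ∈ Finset.range t, m.choose 3 := by
          apply Finset.sum_congr rfl
          intro b _
          rw [tripleCard, Nat.card_Icc]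
          congr 1
          omega
      _ = t * m.choose 3 := by rw [Finset.sum_const, Finset.card_range, smul_eq_mul]
  have hgc : n.choose 3 - t * m.choose 3 ≤ goodCount n φ := by omega
  -- fmax is the sup
  have hmem : goodCount n φ ∈ {x | ∃ ψ : ℕ → ℕ → ℕ, IsLabeling n k ψ ∧ goodCount n ψ = x} :=
    ⟨φ, hlab, rfl⟩
  have hbdd : BddAbove {x | ∃ ψ : ℕ → ℕ → ℕ, IsLabeling n k ψ ∧ goodCount n ψ = x} := by
    refine ⟨n * (n * n), ?_⟩
    rintro x ⟨ψ, _, rfl⟩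
    calc goodCount n ψ ≤ s.card := Finset.card_filter_le _ _
      _ = n * (n * n) := by
        rw [hs, Finset.card_product, Finset.card_product, Nat.card_Icc]
        simp
  calc n.choose 3 - t * (n / t).choose 3 ≤ goodCount n φ := hgc
    _ ≤ fmax n k := le_csSup hbdd hmem
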